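/- Assume c_j > 0 and l_j > 0 for all j, set q_j = l_j/c_j, and assume the q_j are pairwise distinct. Let β > 0 satisfy β·q_j < φ'(0) for all j, and let x₀ ∈ ℝⁿ be the point with x₀_j = ψ(β q_j) for j = 1,…,n−1 and x₀_n = −ψ(β q_n); set d_j = c_j·φ''(x₀_j). (Sufficiency) If ∑_{j=1}^n l_j²/d_j > 0 and ∑_j l_j x₀_j = b, then x₀ is a local maximum of f on P. (Necessity) If x₀ is a local maximum of f on P, then ∑_{j=1}^n l_j²/d_j ≥ 0 and ∑_j l_j x₀_j = b. -/

import Mathlib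

set_option maxHeartbeats 1000000

open scoped BigOperators Topology


/-- Quadratic upper bound from a second-derivative bound on an interval. -/
lemma my_quad_upper (g : ℝ → ℝ) (hg1 : Differentiable ℝ g) (hg2 : Differentiable ℝ (deriv g))
    (p U δ : ℝ) (hδ : 0 < δ) (h0 : deriv g p = 0)
    (hU : ∀ t ∈ Set.Icc (p - δ) (p + δ), deriv (deriv g) t ≤ U) :
    ∀ s : ℝ, |s| ≤ δ → g (p + s) ≤ g p + U / 2 * s ^ 2 := by
  set G : ℝ → ℝ := fun x => g x - g p - U / 2 * (x - p) ^ 2 with hG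
  have hGd : ∀ x : ℝ, HasDerivAt G (deriv g x - U * (x - p)) x := by
    intro x
    have h1 : HasDerivAt (fun x : ℝ => U / 2 * (x - p) ^ 2) (U * (x - p)) x := by
      have := (((hasDerivAt_id x).sub_const p).pow 2).const_mul (U / 2)
      refine this.congr_deriv ?_
      simp [id]; ring
    exact ((hg1 x).hasDerivAt.sub_const (g p)).sub h1
  have hGderiv : deriv G = fun x => deriv g x - U * (x - p) := by
    funext x; exact (hGd x).deriv
  have hG'd : ∀ x : ℝ, HasDerivAt (deriv G) (deriv (deriv g) x - U) x := by
    intro x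
    rw [hGderiv]
    exact ((hg2 x).hasDerivAt).sub ((((hasDerivAt_id x).sub_const p).const_mul U).congr_deriv (mul_one U))
  -- deriv G is antitone on [p-δ, p+δ]
  have hanti : AntitoneOn (deriv G) (Set.Icc (p - δ) (p + δ)) := by
    apply antitoneOn_of_deriv_nonpos (convex_Icc _ _)
    · exact (Continuous.continuousOn (by
        rw [hGderiv]
        exact (hg2.continuous.sub (continuous_const.mul ((continuous_id.sub continuous_const))))))
    · intro x hx
      exact ((hG'd x).differentiableAt).differentiableWithinAt
    · intro x hx
      rw [(hG'd x).deriv]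
      have hx' : x ∈ Set.Icc (p - δ) (p + δ) := interior_subset hx
      linarith [hU x hx']
  have hGp : deriv G p = 0 := by rw [hGderiv]; simp [h0]
  have hmem : p ∈ Set.Icc (p - δ) (p + δ) := by constructor <;> linarith
  -- G antitone on [p, p+δ], monotone on [p-δ, p]
  have hGcont : Continuous G := by
    apply (hg1.continuous.sub continuous_const).sub
    exact continuous_const.mul ((continuous_id.sub continuous_const).pow 2)
  have h1 : AntitoneOn G (Set.Icc p (p + δ)) := by
    apply antitoneOn_of_deriv_nonpos (convex_Icc _ _) hGcont.continuousOn
    · intro x hx; exact (hGd x).differentiableAt.differentiableWithinAt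
    · intro x hx
      rw [interior_Icc] at hx
      have hx' : x ∈ Set.Icc (p - δ) (p + δ) := ⟨by linarith [hx.1], le_of_lt hx.2⟩
      have := hanti hmem hx' (le_of_lt hx.1)
      rw [hGp] at this
      exact this
  have h2 : MonotoneOn G (Set.Icc (p - δ) p) := by
    apply monotoneOn_of_deriv_nonneg (convex_Icc _ _) hGcont.continuousOn
    · intro x hx; exact (hGd x).differentiableAt.differentiableWithinAt
    · intro x hx
      rw [interior_Icc] at hx
      have hx' : x ∈ Set.Icc (p - δ) (p + δ) := ⟨le_of_lt hx.1, by linarith [hx.2]⟩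
      have := hanti hx' hmem (le_of_lt hx.2)
      rw [hGp] at this
      exact this
  intro s hs
  rw [abs_le] at hs
  have hGle : G (p + s) ≤ G p := by
    rcases le_or_gt 0 s with h | h
    · exact h1 ⟨le_refl p, by linarith⟩ ⟨by linarith, by linarith⟩ (by linarith)
    · exact h2 ⟨by linarith, by linarith⟩ ⟨by linarith, le_refl p⟩ (by linarith)
  have : G p = 0 := by simp [hG]
  rw [this] at hGle
  have : g (p + s) - g p - U / 2 * (p + s - p) ^ 2 ≤ 0 := hGle
  have hps : p + s - p = s := by ring
  rw [hps] at this
  linarith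


/-- Negative semidefiniteness on the hyperplane. -/
lemma my_quad_neg (n : ℕ) (a l δ : Fin (n + 1) → ℝ)
    (ha : ∀ j, j ≠ Fin.last n → a j < 0) (han : 0 < a (Fin.last n))
    (hl : ∀ j, 0 < l j)
    (hS : 0 ≤ ∑ j, l j ^ 2 / a j)
    (hδ : ∑ j, l j * δ j = 0) :
    ∑ j, a j * δ j ^ 2 ≤ 0 := by
  set N := Fin.last n
  set s : Finset (Fin (n + 1)) := Finset.univ.erase N with hs
  have hmem : N ∈ Finset.univ (α := Fin (n + 1)) := Finset.mem_univ _
  set A := ∑ j ∈ s, l j ^ 2 / (-(a j)) with hA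
  set B := ∑ j ∈ s, (-(a j)) * δ j ^ 2 with hB
  have hja : ∀ j ∈ s, a j < 0 := fun j hj => ha j (Finset.ne_of_mem_erase hj)
  have hBnn : 0 ≤ B := Finset.sum_nonneg fun j hj =>
    mul_nonneg (by linarith [hja j hj]) (sq_nonneg _)
  -- Cauchy-Schwarz
  have hcs : (∑ j ∈ s, l j * δ j) ^ 2 ≤ A * B := by
    have := Finset.sum_mul_sq_le_sq_mul_sq s (fun j => l j / Real.sqrt (-(a j)))
      (fun j => Real.sqrt (-(a j)) * δ j)
    have he1 : ∀ j ∈ s, l j / Real.sqrt (-(a j)) * (Real.sqrt (-(a j)) * δ j) = l j * δ j := by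
      intro j hj
      have h1 : (0:ℝ) < -(a j) := by linarith [hja j hj]
      have h2 : Real.sqrt (-(a j)) ≠ 0 := ne_of_gt (Real.sqrt_pos.mpr h1)
      field_simp
    have he2 : ∀ j ∈ s, (l j / Real.sqrt (-(a j))) ^ 2 = l j ^ 2 / (-(a j)) := by
      intro j hj
      have h1 : (0:ℝ) ≤ -(a j) := by linarith [hja j hj]
      rw [div_pow, Real.sq_sqrt h1]
    have he3 : ∀ j ∈ s, (Real.sqrt (-(a j)) * δ j) ^ 2 = (-(a j)) * δ j ^ 2 := by
      intro j hj
      have h1 : (0:ℝ) ≤ -(a j) := by linarith [hja j hj]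
      rw [mul_pow, Real.sq_sqrt h1]
    rw [Finset.sum_congr rfl he1, Finset.sum_congr rfl he2, Finset.sum_congr rfl he3] at this
    exact this
  have hsum1 : ∑ j, l j * δ j = l N * δ N + ∑ j ∈ s, l j * δ j := by
    exact (Finset.add_sum_erase _ _ hmem).symm
  have hsplit : ∑ j ∈ s, l j * δ j = -(l N * δ N) := by
    rw [hsum1] at hδ; linarith
  have hcs2 : (l N * δ N) ^ 2 ≤ A * B := by
    rw [hsplit] at hcs; rw [← neg_sq]; exact hcs
  -- hS gives A ≤ l N ^ 2 / a N
  have hsum2 : ∑ j, l j ^ 2 / a j = l N ^ 2 / a N + ∑ j ∈ s, l j ^ 2 / a j := by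
    exact (Finset.add_sum_erase _ _ hmem).symm
  have hAneg : ∑ j ∈ s, l j ^ 2 / a j = -A := by
    rw [hA, ← Finset.sum_neg_distrib]
    apply Finset.sum_congr rfl
    intro j hj
    rw [div_neg]
    ring
  have hAle : A ≤ l N ^ 2 / a N := by
    rw [hsum2, hAneg] at hS; linarith
  have hAle' : A * a N ≤ l N ^ 2 := by
    rw [div_eq_mul_inv] at hAle
    calc A * a N ≤ l N ^ 2 * (a N)⁻¹ * a N := by nlinarith
    _ = l N ^ 2 := by field_simp
  -- conclude
  have hsum3 : ∑ j, a j * δ j ^ 2 = a N * δ N ^ 2 + ∑ j ∈ s, a j * δ j ^ 2 := by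
    exact (Finset.add_sum_erase _ _ hmem).symm
  have hBeq : ∑ j ∈ s, a j * δ j ^ 2 = -B := by
    rw [hB, ← Finset.sum_neg_distrib]
    apply Finset.sum_congr rfl
    intro j hj; ring
  rw [hsum3, hBeq]
  have hlN : 0 < l N ^ 2 := pow_pos (hl N) 2
  nlinarith [hcs2, hAle', hBnn, han, mul_pos han hlN]


lemma my_second_pos (u : ℝ → ℝ) (hu : Differentiable ℝ u) (h0 : deriv u 0 = 0)
    (Q : ℝ) (hQd : HasDerivAt (deriv u) Q 0) (hQ : 0 < Q) :
    ∀ ε > 0, ∃ t : ℝ, |t| < ε ∧ u 0 < u t := by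
  intro ε hε
  have hslope : Filter.Tendsto (slope (deriv u) 0) (𝓝[≠] 0) (𝓝 Q) :=
    hasDerivAt_iff_tendsto_slope.mp hQd
  have hev : ∀ᶠ t in 𝓝[≠] (0:ℝ), 0 < slope (deriv u) 0 t :=
    hslope.eventually (eventually_gt_nhds hQ)
  rw [eventually_nhdsWithin_iff, Metric.eventually_nhds_iff] at hev
  obtain ⟨r, hr, hrev⟩ := hev
  set t₀ := min r ε / 2 with ht₀
  have ht₀pos : 0 < t₀ := by positivity
  have ht₀r : t₀ < r := by
    have h := min_le_left r ε; rw [ht₀]; linarith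
  have ht₀ε : t₀ < ε := by
    have h := min_le_right r ε; rw [ht₀]; linarith
  -- deriv u is positive on (0, t₀)
  have hpos : ∀ x ∈ Set.Ioo (0:ℝ) t₀, 0 < deriv u x := by
    intro x hx
    have hxr : dist x 0 < r := by
      rw [Real.dist_eq, sub_zero, abs_of_pos hx.1]; linarith [hx.2]
    have hxne : x ∈ ({0}ᶜ : Set ℝ) := by simp [ne_of_gt hx.1]
    have hsl := hrev hxr hxne
    rw [slope_def_field, h0] at hsl
    have h2 : 0 < deriv u x / x := by simpa using hsl
    have := (div_pos_iff.mp h2)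
    rcases this with ⟨h3, _⟩ | ⟨_, h4⟩
    · exact h3
    · exact absurd hx.1 (not_lt.mpr (le_of_lt h4))
  have hmono : StrictMonoOn u (Set.Icc 0 t₀) := by
    apply strictMonoOn_of_deriv_pos (convex_Icc _ _) hu.continuous.continuousOn
    intro x hx
    rw [interior_Icc] at hx
    exact hpos x hx
  refine ⟨t₀, ?_, ?_⟩
  · rw [abs_of_pos ht₀pos]; exact ht₀ε
  · exact hmono ⟨le_refl 0, le_of_lt ht₀pos⟩ ⟨le_of_lt ht₀pos, le_refl _⟩ ht₀pos

/-- Under (A1), with `cⱼ > 0`, `lⱼ > 0`, `qⱼ = lⱼ/cⱼ` pairwise distinct,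
let `β > 0` with `β qⱼ < φ'(0)` for all `j`, and let `x₀` have coordinates
`x₀ⱼ = ψ(β qⱼ)` for `j ≠ n` and `x₀ₙ = −ψ(β qₙ)`; set `dⱼ = cⱼ φ''(x₀ⱼ)`.
Sufficiency: if `∑ lⱼ²/dⱼ > 0` and `∑ lⱼ x₀ⱼ = b`, then `x₀` is a local maximum of `f`
on `P`. Necessity: if `x₀` is a local maximum of `f` on `P`, then `∑ lⱼ²/dⱼ ≥ 0` and
`∑ lⱼ x₀ⱼ = b`.  (Dimension is `n + 1 ≥ 2`; the distinguished last index plays the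
role of the index `n` of the paper.) -/
theorem stmt_5 (n : ℕ) (hn : 1 ≤ n) (φ ψ : ℝ → ℝ)
    (hφC : ContDiff ℝ 2 φ)
    (hodd : ∀ x : ℝ, φ (-x) = -φ x)
    (hφ' : ∀ x : ℝ, 0 < deriv φ x)
    (hφ'' : ∀ x : ℝ, x ≠ 0 → x * deriv (deriv φ) x < 0)
    (hlim : ∃ L : ℝ, Filter.Tendsto φ Filter.atTop (nhds L))
    (hψ : ∀ y : ℝ, 0 < y → y ≤ deriv φ 0 → 0 ≤ ψ y ∧ deriv φ (ψ y) = y)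
    (hψinv : ∀ x : ℝ, 0 ≤ x → ψ (deriv φ x) = x)
    (c l q : Fin (n + 1) → ℝ) (hc : ∀ j, 0 < c j) (hl : ∀ j, 0 < l j)
    (hq : ∀ j, q j = l j / c j) (hqinj : Function.Injective q) (b : ℝ)
    (f : EuclideanSpace ℝ (Fin (n + 1)) → ℝ)
    (hf : ∀ x : EuclideanSpace ℝ (Fin (n + 1)), f x = ∑ i, c i * φ (x i))
    (P : Set (EuclideanSpace ℝ (Fin (n + 1))))
    (hP : P = {x : EuclideanSpace ℝ (Fin (n + 1)) | ∑ j, l j * x j = b})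
    (β : ℝ) (hβ : 0 < β) (hβq : ∀ j, β * q j < deriv φ 0)
    (x₀ : EuclideanSpace ℝ (Fin (n + 1)))
    (hx₀ : ∀ j, j ≠ Fin.last n → x₀ j = ψ (β * q j))
    (hx₀n : x₀ (Fin.last n) = -ψ (β * q (Fin.last n)))
    (d : Fin (n + 1) → ℝ) (hd : ∀ j, d j = c j * deriv (deriv φ) (x₀ j)) :
    ((0 < ∑ j, (l j) ^ 2 / d j) → (∑ j, l j * x₀ j) = b →
      x₀ ∈ P ∧ ∃ ε > 0, ∀ x ∈ P, ‖x - x₀‖ < ε → f x ≤ f x₀) ∧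
    ((x₀ ∈ P ∧ ∃ ε > 0, ∀ x ∈ P, ‖x - x₀‖ < ε → f x ≤ f x₀) →
      (0 ≤ ∑ j, (l j) ^ 2 / d j) ∧ (∑ j, l j * x₀ j) = b) := by
  -- ## Common facts
  have hφd : Differentiable ℝ φ := hφC.differentiable (by norm_num)
  have h2' : ContDiff ℝ ((1 : WithTop ℕ∞) + 1) φ := by norm_num; exact hφC
  have hC1 : ContDiff ℝ 1 (deriv φ) := (contDiff_succ_iff_deriv.mp h2').2.2
  have hφd2 : Differentiable ℝ (deriv φ) := hC1.differentiable one_ne_zero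
  have hφ''c : Continuous (deriv (deriv φ)) := hC1.continuous_deriv le_rfl
  have heven : ∀ x : ℝ, deriv φ (-x) = deriv φ x := by
    intro x
    have h1 : deriv (fun y : ℝ => φ (-y)) x = -deriv φ (-x) := deriv_comp_neg φ x
    have h2 : (fun y : ℝ => φ (-y)) = fun y => -φ y := funext hodd
    rw [h2, deriv.fun_neg] at h1
    linarith
  have K0 : ∀ j, 0 < β * q j := by
    intro j; rw [hq j]; exact mul_pos hβ (div_pos (hl j) (hc j))
  have Kψ : ∀ j, 0 ≤ ψ (β * q j) ∧ deriv φ (ψ (β * q j)) = β * q j :=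
    fun j => hψ _ (K0 j) (le_of_lt (hβq j))
  have Kψpos : ∀ j, 0 < ψ (β * q j) := by
    intro j
    rcases lt_or_eq_of_le (Kψ j).1 with h | h
    · exact h
    · exfalso
      have := (Kψ j).2
      rw [← h] at this
      exact absurd this.symm (ne_of_lt (hβq j))
  have Kx₀ : ∀ j, deriv φ (x₀ j) = β * q j := by
    intro j
    by_cases hj : j = Fin.last n
    · rw [hj, hx₀n, heven]; exact (Kψ _).2
    · rw [hx₀ j hj]; exact (Kψ j).2
  have K1 : ∀ j, c j * deriv φ (x₀ j) = β * l j := by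
    intro j
    have hcne : c j ≠ 0 := (hc j).ne'
    rw [Kx₀ j, hq j]
    field_simp
  have Ksign : ∀ j, j ≠ Fin.last n → d j < 0 := by
    intro j hj
    have hx : 0 < x₀ j := by rw [hx₀ j hj]; exact Kψpos j
    have := hφ'' (x₀ j) (ne_of_gt hx)
    have h'' : deriv (deriv φ) (x₀ j) < 0 := by
      by_contra h
      push_neg at h
      nlinarith
    rw [hd j]
    exact mul_neg_of_pos_of_neg (hc j) h''
  have KsignN : 0 < d (Fin.last n) := by
    have hx : x₀ (Fin.last n) < 0 := by
      rw [hx₀n]; linarith [Kψpos (Fin.last n)]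
    have := hφ'' (x₀ (Fin.last n)) (ne_of_lt hx)
    have h'' : 0 < deriv (deriv φ) (x₀ (Fin.last n)) := by
      by_contra h
      push_neg at h
      nlinarith
    rw [hd _]
    exact mul_pos (hc _) h''
  have Kdne : ∀ j, d j ≠ 0 := by
    intro j
    by_cases hj : j = Fin.last n
    · rw [hj]; exact ne_of_gt KsignN
    · exact ne_of_lt (Ksign j hj)
  -- the auxiliary one-variable functions
  set g : Fin (n + 1) → ℝ → ℝ := fun j t => c j * φ t - β * l j * t with hgdef
  have hgHD : ∀ j t, HasDerivAt (g j) (c j * deriv φ t - β * l j) t := by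
    intro j t
    have h1 : HasDerivAt (fun t => c j * φ t) (c j * deriv φ t) t :=
      ((hφd t).hasDerivAt).const_mul (c j)
    have h2 : HasDerivAt (fun t : ℝ => β * l j * t) (β * l j) t := by
      simpa using (hasDerivAt_id t).const_mul (β * l j)
    exact h1.sub h2
  have hg1 : ∀ j, Differentiable ℝ (g j) := fun j t => (hgHD j t).differentiableAt
  have hgderiv : ∀ j, deriv (g j) = fun t => c j * deriv φ t - β * l j :=
    fun j => funext fun t => (hgHD j t).deriv
  have hgHD2 : ∀ j t, HasDerivAt (deriv (g j)) (c j * deriv (deriv φ) t) t := by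
    intro j t
    rw [hgderiv j]
    simpa using (((hφd2 t).hasDerivAt).const_mul (c j)).sub_const (β * l j)
  have hg2 : ∀ j, Differentiable ℝ (deriv (g j)) := fun j t => (hgHD2 j t).differentiableAt
  have hgdd : ∀ j t, deriv (deriv (g j)) t = c j * deriv (deriv φ) t :=
    fun j t => (hgHD2 j t).deriv
  have hg0 : ∀ j, deriv (g j) (x₀ j) = 0 := by
    intro j
    rw [hgderiv j]
    simp only []
    linarith [K1 j]
  -- nonempty erase
  have hlast_ne : (0 : Fin (n + 1)) ≠ Fin.last n := by
    intro h
    have := congrArg Fin.val h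
    simp [Fin.last] at this
    omega
  have hsne : (Finset.univ.erase (Fin.last n)).Nonempty :=
    ⟨0, Finset.mem_erase.mpr ⟨hlast_ne, Finset.mem_univ _⟩⟩
  constructor
  · -- ## Sufficiency
    intro hSpos hbsum
    refine ⟨by rw [hP]; exact hbsum, ?_⟩
    -- choose ε > 0 with d j + ε still good
    set εm := (Finset.univ.erase (Fin.last n)).inf' hsne (fun j => -(d j)) with hεm
    have hεmpos : 0 < εm := by
      rw [hεm, Finset.lt_inf'_iff]
      intro j hj
      linarith [Ksign j (Finset.ne_of_mem_erase hj)]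
    have hcont : Filter.Tendsto (fun ε : ℝ => ∑ j, l j ^ 2 / (d j + ε)) (𝓝 0)
        (𝓝 (∑ j, l j ^ 2 / (d j + 0))) := by
      apply tendsto_finset_sum
      intro j _
      exact ContinuousAt.div continuousAt_const
        ((continuous_const.add continuous_id).continuousAt) (by simpa using Kdne j)
    have hF0 : (0:ℝ) < ∑ j, l j ^ 2 / (d j + 0) := by simpa using hSpos
    have hev : ∀ᶠ ε in 𝓝 (0:ℝ), 0 < ∑ j, l j ^ 2 / (d j + ε) :=
      hcont.eventually (eventually_gt_nhds hF0)
    rw [Metric.eventually_nhds_iff] at hev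
    obtain ⟨δF, hδF, hδFp⟩ := hev
    set ε := min (δF / 2) (εm / 2) with hε
    have hεpos : 0 < ε := by positivity
    have hεδF : ε < δF := by
      have := min_le_left (δF / 2) (εm / 2); rw [hε]; linarith
    have hεεm : ε < εm := by
      have := min_le_right (δF / 2) (εm / 2); rw [hε]; linarith
    have hSε : 0 < ∑ j, l j ^ 2 / (d j + ε) := by
      apply hδFp
      rw [Real.dist_eq, sub_zero, abs_of_pos hεpos]
      exact hεδF
    have hdεneg : ∀ j, j ≠ Fin.last n → d j + ε < 0 := by
      intro j hj
      have h1 : εm ≤ -(d j) := Finset.inf'_le _ (Finset.mem_erase.mpr ⟨hj, Finset.mem_univ _⟩)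
      linarith
    have hdεpos : 0 < d (Fin.last n) + ε := by linarith
    -- choose δ
    have hall : ∀ j, ∃ δ' > 0, ∀ t : ℝ, dist t (x₀ j) < δ' →
        c j * deriv (deriv φ) t < d j + ε := by
      intro j
      have hcj : ContinuousAt (fun t => c j * deriv (deriv φ) t) (x₀ j) :=
        (continuous_const.mul hφ''c).continuousAt
      have hval : c j * deriv (deriv φ) (x₀ j) < d j + ε := by rw [← hd j]; linarith
      have := hcj.eventually_mem (isOpen_gt' (d j + ε) |>.mem_nhds hval)
      rw [Metric.eventually_nhds_iff] at this
      obtain ⟨δ', h1, h2⟩ := this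
      exact ⟨δ', h1, fun t ht => h2 ht⟩
    choose δfun hδfpos hδfprop using hall
    set δ0 := Finset.univ.inf' Finset.univ_nonempty δfun with hδ0
    have hδ0pos : 0 < δ0 := by
      rw [hδ0, Finset.lt_inf'_iff]
      intro j _
      exact hδfpos j
    refine ⟨δ0 / 2, by positivity, ?_⟩
    intro x hxP hxnorm
    rw [hP] at hxP
    have hcoord : ∀ j, |x j - x₀ j| ≤ ‖x - x₀‖ := by
      intro j
      have h2 : ‖x - x₀‖ ^ 2 = ∑ i, ‖(x - x₀) i‖ ^ 2 := PiLp.norm_sq_eq_of_L2 _ _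
      have h3 : |x j - x₀ j| ^ 2 ≤ ∑ i, ‖(x - x₀) i‖ ^ 2 := by
        have hnn : ∀ i ∈ Finset.univ, (0:ℝ) ≤ ‖(x - x₀) i‖ ^ 2 := fun i _ => sq_nonneg _
        have h4 := Finset.single_le_sum hnn (Finset.mem_univ j)
        simpa [Real.norm_eq_abs] using h4
      nlinarith [abs_nonneg (x j - x₀ j), norm_nonneg (x - x₀)]
    have key : ∀ j, c j * φ (x j) - β * (l j * x j) ≤
        c j * φ (x₀ j) - β * (l j * x₀ j) + (d j + ε) / 2 * (x j - x₀ j) ^ 2 := by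
      intro j
      have hU : ∀ t ∈ Set.Icc (x₀ j - δ0 / 2) (x₀ j + δ0 / 2),
          deriv (deriv (g j)) t ≤ d j + ε := by
        intro t ht
        rw [hgdd j t]
        apply le_of_lt
        apply hδfprop j
        rw [Real.dist_eq]
        have h1 : |t - x₀ j| ≤ δ0 / 2 := abs_le.mpr ⟨by linarith [ht.1], by linarith [ht.2]⟩
        have h2 : δ0 ≤ δfun j := Finset.inf'_le _ (Finset.mem_univ j)
        linarith
      have hs : |x j - x₀ j| ≤ δ0 / 2 := le_of_lt (lt_of_le_of_lt (hcoord j) hxnorm)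
      have := my_quad_upper (g j) (hg1 j) (hg2 j) (x₀ j) (d j + ε) (δ0 / 2)
        (by positivity) (hg0 j) hU (x j - x₀ j) hs
      have hxx : x₀ j + (x j - x₀ j) = x j := by ring
      rw [hxx] at this
      simp only [hgdef] at this
      linarith
    have hsumle := Finset.sum_le_sum (s := Finset.univ) (fun j _ => key j)
    rw [Finset.sum_sub_distrib, Finset.sum_add_distrib, Finset.sum_sub_distrib,
      ← Finset.mul_sum, ← Finset.mul_sum, hxP, hbsum] at hsumle
    have hquad : ∑ j, (d j + ε) * (x j - x₀ j) ^ 2 ≤ 0 := by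
      apply my_quad_neg n (fun j => d j + ε) l (fun j => x j - x₀ j) hdεneg hdεpos hl
        (le_of_lt hSε)
      have : ∑ j, l j * (x j - x₀ j) = (∑ j, l j * x j) - ∑ j, l j * x₀ j := by
        rw [← Finset.sum_sub_distrib]
        exact Finset.sum_congr rfl fun j _ => by ring
      rw [this, hxP, hbsum]
      ring
    have hhalf : ∑ j, (d j + ε) / 2 * (x j - x₀ j) ^ 2 =
        (∑ j, (d j + ε) * (x j - x₀ j) ^ 2) / 2 := by
      rw [Finset.sum_div]
      exact Finset.sum_congr rfl fun j _ => by ring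
    rw [hf x, hf x₀]
    rw [hhalf] at hsumle
    linarith
  · -- ## Necessity
    rintro ⟨hxP, ε, hεpos, hmax⟩
    rw [hP] at hxP
    refine ⟨?_, hxP⟩
    by_contra hneg
    push_neg at hneg
    -- build the bad direction v
    set N := Fin.last n with hN
    set s : Finset (Fin (n + 1)) := Finset.univ.erase N with hsdef
    set A := ∑ j ∈ s, l j ^ 2 / (-(d j)) with hA
    have hApos : 0 < A := by
      rw [hA]
      apply Finset.sum_pos _ hsne
      intro j hj
      have := Ksign j (Finset.ne_of_mem_erase hj)
      exact div_pos (pow_pos (hl j) 2) (by linarith)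
    set v : Fin (n + 1) → ℝ := fun j => if j = N then A / l N else l j / d j with hv
    have hsumA : ∑ j ∈ s, l j ^ 2 / d j = -A := by
      rw [hA, ← Finset.sum_neg_distrib]
      apply Finset.sum_congr rfl
      intro j hj
      rw [div_neg]; ring
    have hlv : ∑ j, l j * v j = 0 := by
      rw [← Finset.add_sum_erase _ _ (Finset.mem_univ N)]
      have h1 : l N * v N = A := by
        have hvN : v N = A / l N := by rw [hv]; simp
        rw [hvN, ← mul_div_assoc]
        exact mul_div_cancel_left₀ A (hl N).ne'
      have h2 : ∑ j ∈ Finset.univ.erase N, l j * v j = -A := by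
        rw [← hsumA]
        apply Finset.sum_congr rfl
        intro j hj
        rw [hv]; simp only [if_neg (Finset.ne_of_mem_erase hj)]
        rw [div_eq_mul_inv]; ring
      rw [h1, h2]; ring
    set Q := ∑ j, d j * v j ^ 2 with hQdef
    have hQval : Q = d N * (A / l N) ^ 2 - A := by
      rw [hQdef, ← Finset.add_sum_erase _ _ (Finset.mem_univ N)]
      have h1 : d N * v N ^ 2 = d N * (A / l N) ^ 2 := by rw [hv]; simp
      have h2 : ∑ j ∈ Finset.univ.erase N, d j * v j ^ 2 = -A := by
        rw [← hsumA]
        apply Finset.sum_congr rfl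
        intro j hj
        rw [hv]; simp only [if_neg (Finset.ne_of_mem_erase hj)]
        have hdj : d j ≠ 0 := Kdne j
        field_simp
      rw [h1, h2]; ring
    have hQpos : 0 < Q := by
      have hsplit : ∑ j, l j ^ 2 / d j = l N ^ 2 / d N + ∑ j ∈ s, l j ^ 2 / d j :=
        (Finset.add_sum_erase _ _ (Finset.mem_univ N)).symm
      rw [hsplit, hsumA] at hneg
      -- l N ^2 / d N < A, d N > 0 ⇒ l N ^2 < d N * A ⇒ d N * (A/lN)^2 > A
      have hdN : 0 < d N := KsignN
      have hlN : 0 < l N := hl N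
      have h1 : l N ^ 2 < d N * A := by
        have := (div_lt_iff₀ hdN).mp (by linarith : l N ^ 2 / d N < A)
        linarith
      have hlN2 : (0:ℝ) < l N ^ 2 := pow_pos hlN 2
      have hkey : d N * (A / l N) ^ 2 = d N * A * A / l N ^ 2 := by
        rw [div_pow]; ring
      rw [hQval, hkey, sub_pos, lt_div_iff₀ hlN2]
      nlinarith
    -- the curve
    set V : EuclideanSpace ℝ (Fin (n + 1)) := (WithLp.equiv 2 (Fin (n + 1) → ℝ)).symm v with hV
    have hVj : ∀ j, V j = v j := fun j => rfl
    set u : ℝ → ℝ := fun t => ∑ j, c j * φ (x₀ j + t * v j) with hu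
    have hyP : ∀ t : ℝ, (x₀ + t • V) ∈ P := by
      intro t
      rw [hP]
      show ∑ j, l j * (x₀ + t • V) j = b
      have : ∀ j, (x₀ + t • V) j = x₀ j + t * v j := by
        intro j
        simp [PiLp.add_apply, PiLp.smul_apply, smul_eq_mul, hVj]
      rw [Finset.sum_congr rfl fun j _ => by rw [this j]]
      have : ∑ j, l j * (x₀ j + t * v j) =
          (∑ j, l j * x₀ j) + t * ∑ j, l j * v j := by
        rw [Finset.mul_sum, ← Finset.sum_add_distrib]
        apply Finset.sum_congr rfl
        intro j _; ring
      rw [this, hlv, hxP]; ring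
    have huf : ∀ t : ℝ, u t = f (x₀ + t • V) := by
      intro t
      rw [hf]
      apply Finset.sum_congr rfl
      intro j _
      rfl
    have hu0 : u 0 = f x₀ := by
      rw [hf]
      show ∑ j, c j * φ (x₀ j + 0 * v j) = ∑ i, c i * φ (x₀ i)
      exact Finset.sum_congr rfl fun j _ => by norm_num
    -- derivatives of u
    have huHD : ∀ t : ℝ, HasDerivAt u (∑ j, c j * (deriv φ (x₀ j + t * v j) * v j)) t := by
      intro t
      apply HasDerivAt.fun_sum
      intro j _
      have hinner : HasDerivAt (fun t : ℝ => x₀ j + t * v j) (v j) t := by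
        simpa using ((hasDerivAt_id t).mul_const (v j)).const_add (x₀ j)
      have := ((hφd _).hasDerivAt).comp t hinner
      simpa [mul_assoc] using (this.const_mul (c j))
    have hud : Differentiable ℝ u := fun t => (huHD t).differentiableAt
    have huderiv : deriv u = fun t => ∑ j, c j * (deriv φ (x₀ j + t * v j) * v j) :=
      funext fun t => (huHD t).deriv
    have hu'0 : deriv u 0 = 0 := by
      rw [huderiv]
      simp only [zero_mul, add_zero]
      have h1 : ∀ j, c j * (deriv φ (x₀ j) * v j) = β * (l j * v j) := by
        intro j
        rw [← mul_assoc, K1 j]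
        ring
      rw [Finset.sum_congr rfl fun j _ => h1 j, ← Finset.mul_sum, hlv]
      ring
    have huHD2 : HasDerivAt (deriv u) Q 0 := by
      rw [huderiv]
      have hQeq : Q = ∑ j, c j * (deriv (deriv φ) (x₀ j + 0 * v j) * v j * v j) := by
        rw [hQdef]
        apply Finset.sum_congr rfl
        intro j _
        rw [hd j]
        simp only [zero_mul, add_zero]
        ring
      rw [hQeq]
      apply HasDerivAt.fun_sum
      intro j _
      have hinner : HasDerivAt (fun t : ℝ => x₀ j + t * v j) (v j) 0 := by
        simpa using ((hasDerivAt_id (0:ℝ)).mul_const (v j)).const_add (x₀ j)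
      have h2 := ((hφd2 _).hasDerivAt).comp (0:ℝ) hinner
      have h3 := (h2.mul_const (v j)).const_mul (c j)
      exact h3
    -- contradiction
    have hVnorm : (0:ℝ) < ‖V‖ + 1 := by positivity
    obtain ⟨t, ht1, ht2⟩ := my_second_pos u hud hu'0 Q huHD2 hQpos (ε / (‖V‖ + 1))
      (by positivity)
    have hnorm : ‖(x₀ + t • V) - x₀‖ < ε := by
      have hc1 : (x₀ + t • V) - x₀ = t • V := add_sub_cancel_left x₀ (t • V)
      rw [hc1, norm_smul, Real.norm_eq_abs]
      have h1 : |t| * ‖V‖ ≤ |t| * (‖V‖ + 1) :=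
        mul_le_mul_of_nonneg_left (by linarith) (abs_nonneg t)
      have h2 : |t| * (‖V‖ + 1) < ε := by
        have h3 := mul_lt_mul_of_pos_right ht1 hVnorm
        rwa [div_mul_cancel₀ _ hVnorm.ne'] at h3
      linarith
    have hle := hmax (x₀ + t • V) (hyP t) hnorm
    have hle2 : u t ≤ u 0 := by rw [huf t, hu0]; exact hle
    exact absurd hle2 (not_le.mpr ht2)
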